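/- Consider the Ermakov system x'' = −ω(t)²x + b/x³, y'' = −ω(t)²y, with b ∈ ℝ constant and x(t) ≠ 0. Then the Lewis–Riesenfeld invariant F(t) = (y(t)x'(t) − x(t)y'(t))² + b(1 + y(t)²/x(t)²) is a constant of motion: dF/dt = 0 along any pair of solutions (x,y). -/

import Mathlib

/-- the Lewis–Riesenfeld invariant
F = (y x' − x y')² + b(1 + y²/x²) is a constant of motion of the Ermakov system
x'' = −ω(t)²x + b/x³, y'' = −ω(t)²y (x nowhere vanishing). -/
theorem ermakov_lewis_riesenfeld_invariant
    (ω : ℝ → ℝ) (hω : Continuous ω) (b : ℝ)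
    (x y vx vy : ℝ → ℝ)
    (hx0 : ∀ t, x t ≠ 0)
    (hx : ∀ t, HasDerivAt x (vx t) t)
    (hy : ∀ t, HasDerivAt y (vy t) t)
    (hvx : ∀ t, HasDerivAt vx (-(ω t) ^ 2 * x t + b / (x t) ^ 3) t)
    (hvy : ∀ t, HasDerivAt vy (-(ω t) ^ 2 * y t) t)
    (F : ℝ → ℝ)
    (hF : ∀ t, F t = (y t * vx t - x t * vy t) ^ 2 + b * (1 + (y t) ^ 2 / (x t) ^ 2)) :
    ∀ t, HasDerivAt F 0 t := by
  intro t
  have hFe : F = fun t => (y t * vx t - x t * vy t) ^ 2 + b * (1 + (y t) ^ 2 / (x t) ^ 2) :=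
    funext hF
  rw [hFe]
  have hW : HasDerivAt (fun t => y t * vx t - x t * vy t)
      (vy t * vx t + y t * (-(ω t) ^ 2 * x t + b / (x t) ^ 3)
        - (vx t * vy t + x t * (-(ω t) ^ 2 * y t))) t :=
    ((hy t).mul (hvx t)).sub ((hx t).mul (hvy t))
  have hx2 : ((x t) ^ 2 : ℝ) ≠ 0 := pow_ne_zero 2 (hx0 t)
  have hq : HasDerivAt (fun t => (y t) ^ 2 / (x t) ^ 2)
      ((2 * y t * vy t * (x t) ^ 2 - (y t) ^ 2 * (2 * x t * vx t)) / ((x t) ^ 2) ^ 2) t := by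
    have h1 : HasDerivAt (fun t => (y t) ^ 2) (2 * y t * vy t) t := by
      have := (hy t).fun_pow 2; simpa [mul_comm, mul_assoc, mul_left_comm] using this
    have h2 : HasDerivAt (fun t => (x t) ^ 2) (2 * x t * vx t) t := by
      have := (hx t).fun_pow 2; simpa [mul_comm, mul_assoc, mul_left_comm] using this
    exact h1.div h2 hx2
  have h := ((hW.fun_pow 2).fun_add ((hasDerivAt_const t b).fun_mul ((hasDerivAt_const t 1).fun_add hq)))
  refine h.congr_deriv ?_
  have hx0' := hx0 t
  field_simp
  ring
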